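/- Let S ∈ ℝ^{n×n} with S ≻ 0, Ω ∈ ℝ^{n×n} symmetric, X1 ∈ ℝ^{n×T}, L ∈ ℝ^{T×n}, Δ ∈ ℝ^{n×s}, and μ, ε, σ > 0. Suppose the 2n×2n block matrix inequality [[−μ·S·Ω·S/2 + 2σ²·I + ε⁻¹·μ²·S·Δ·Δᵀ·S, μ·S·X1·L],[(μ·S·X1·L)ᵀ, −I + ε·Lᵀ·L]] ⪯ 0 holds. Then for every D ∈ ℝ^{n×T} with D·Dᵀ ⪯ Δ·Δᵀ, the block matrix inequality [[−μ·S·Ω·S/2 + 2σ²·I, μ·S·(X1−D)·L],[(μ·S·(X1−D)·L)ᵀ, −I]] ⪯ 0 holds. -/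

import Mathlib

open Matrix

theorem stmt_13 (n T s : ℕ)
    (S Ω : Matrix (Fin n) (Fin n) ℝ) (hS : S.PosDef) (hΩ : Ω.IsSymm)
    (X1 : Matrix (Fin n) (Fin T) ℝ) (L : Matrix (Fin T) (Fin n) ℝ)
    (Δ : Matrix (Fin n) (Fin s) ℝ)
    (μ ε σ : ℝ) (hμ : 0 < μ) (hε : 0 < ε) (hσ : 0 < σ)
    (hLMI : (-(Matrix.fromBlocks
        (-((μ / 2) • (S * Ω * S)) + (2 * σ ^ 2) • (1 : Matrix (Fin n) (Fin n) ℝ) +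
          (ε⁻¹ * μ ^ 2) • (S * Δ * Δᵀ * S))
        (μ • (S * X1 * L))
        (μ • (S * X1 * L))ᵀ
        (-(1 : Matrix (Fin n) (Fin n) ℝ) + ε • (Lᵀ * L)))).PosSemidef) :
    ∀ D : Matrix (Fin n) (Fin T) ℝ, (Δ * Δᵀ - D * Dᵀ).PosSemidef →
      (-(Matrix.fromBlocks
        (-((μ / 2) • (S * Ω * S)) + (2 * σ ^ 2) • (1 : Matrix (Fin n) (Fin n) ℝ))
        (μ • (S * (X1 - D) * L))
        (μ • (S * (X1 - D) * L))ᵀ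
        (-(1 : Matrix (Fin n) (Fin n) ℝ)))).PosSemidef := by
  intro D hD
  have hSt : Sᵀ = S := by
    have := hS.1.eq
    rwa [Matrix.conjTranspose_eq_transpose_of_trivial] at this
  set a : ℝ := Real.sqrt ε⁻¹ * μ with ha
  set b : ℝ := Real.sqrt ε with hb
  have hεinv : (0:ℝ) ≤ ε⁻¹ := inv_nonneg.mpr hε.le
  have hb2 : b * b = ε := Real.mul_self_sqrt hε.le
  have ha2 : a * a = ε⁻¹ * μ ^ 2 := by
    rw [ha, mul_mul_mul_comm, Real.mul_self_sqrt hεinv]; ring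
  have hab : a * b = μ := by
    rw [ha, hb, mul_comm (Real.sqrt ε⁻¹) μ, mul_assoc,
      ← Real.sqrt_mul hεinv, inv_mul_cancel₀ hε.ne', Real.sqrt_one, mul_one]
  set C : Matrix (Fin T) (Fin n ⊕ Fin n) ℝ := fromCols (a • (Dᵀ * S)) (b • L) with hC
  set G : Matrix (Fin n) (Fin n ⊕ Fin n) ℝ := fromCols (a • S) 0 with hG
  have hCpsd : (Cᵀ * C).PosSemidef := by
    have := Matrix.posSemidef_conjTranspose_mul_self C
    rwa [Matrix.conjTranspose_eq_transpose_of_trivial] at this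
  have hGpsd : (Gᵀ * (Δ * Δᵀ - D * Dᵀ) * G).PosSemidef := by
    have := hD.conjTranspose_mul_mul_same G
    rwa [Matrix.conjTranspose_eq_transpose_of_trivial] at this
  have key : (-(Matrix.fromBlocks
        (-((μ / 2) • (S * Ω * S)) + (2 * σ ^ 2) • (1 : Matrix (Fin n) (Fin n) ℝ))
        (μ • (S * (X1 - D) * L))
        (μ • (S * (X1 - D) * L))ᵀ
        (-(1 : Matrix (Fin n) (Fin n) ℝ)))) =
      (-(Matrix.fromBlocks
        (-((μ / 2) • (S * Ω * S)) + (2 * σ ^ 2) • (1 : Matrix (Fin n) (Fin n) ℝ) +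
          (ε⁻¹ * μ ^ 2) • (S * Δ * Δᵀ * S))
        (μ • (S * X1 * L))
        (μ • (S * X1 * L))ᵀ
        (-(1 : Matrix (Fin n) (Fin n) ℝ) + ε • (Lᵀ * L)))) +
      Cᵀ * C + Gᵀ * (Δ * Δᵀ - D * Dᵀ) * G := by
    simp only [hC, hG, Matrix.transpose_fromCols, Matrix.fromRows_mul,
      Matrix.mul_fromCols, Matrix.fromRows_fromCols_eq_fromBlocks, Matrix.fromCols_fromRows_eq_fromBlocks,
      Matrix.fromBlocks_neg, Matrix.fromBlocks_add]
    refine Matrix.fromBlocks_inj.mpr ⟨?_, ?_, ?_, ?_⟩ <;>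
      simp only [Matrix.transpose_smul, Matrix.transpose_mul, Matrix.transpose_transpose,
        hSt, Matrix.transpose_zero, Matrix.transpose_sub, Matrix.transpose_one,
        Matrix.smul_mul, Matrix.mul_smul, smul_smul, mul_comm b a, ha2, hab, hb2,
        Matrix.mul_sub, Matrix.sub_mul, Matrix.zero_mul, Matrix.mul_zero, smul_sub, smul_add,
        Matrix.mul_assoc, smul_zero, add_zero] <;>
      module
  rw [key]
  exact (hLMI.add hCpsd).add hGpsd
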